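/- Fix 2 ≤ k ≤ n and 1 ≤ ℓ ≤ n-1, and let M_ℓ be the k × n matrix with first row zero, second row entries m_{2,j} = ℓ - j + 1 for j ≤ ℓ and m_{2,j} = n - j + ℓ + 1 for j > ℓ, and rows i ≥ 3 with entries m_{i,j} = c_i(n-j+1) for sufficiently rapidly growing constants c_i (e.g. c_i = (n+1)^{i-2}·n appropriately). Then for any k-subset J = {j_1 < ... < j_k} ⊆ [n], the unique permutation σ minimizing Σ_i M_ℓ(i, j_{σ(i)}) is: the transposition (12) if j_1 ≤ ℓ < j_2, and the identity otherwise. -/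

import Mathlib

/-- The block diagonal weight matrix `M_ℓ` (0-indexed): first row is zero, the second row
(index 1) is `ℓ - j + 1` for 1-indexed `j ≤ ℓ` and `n - j + ℓ + 1` otherwise, and
rows with index `i ≥ 2` have entries `(n+1)^{i-1} · n · (n - j + 1)` (1-indexed `j`). -/
def blockWeight (n ℓ : ℕ) {k : ℕ} (i : Fin k) (j : Fin n) : ℝ :=
  if (i : ℕ) = 0 then 0
  else if (i : ℕ) = 1 then
    (if (j : ℕ) < ℓ then (ℓ : ℝ) - ((j : ℕ) : ℝ) else (n : ℝ) - ((j : ℕ) : ℝ) + (ℓ : ℝ))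
  else ((n : ℝ) + 1) ^ ((i : ℕ) - 1) * (n : ℝ) * ((n : ℝ) - ((j : ℕ) : ℝ))

lemma auxGeom (n : ℕ) (hn : 2 ≤ n) (m : ℕ) (hm : 2 ≤ m) :
    (∑ j ∈ Finset.Ico 2 m, ((n : ℝ) + 1) ^ (j - 1) * n * n) + n
      ≤ ((n : ℝ) + 1) ^ (m - 1) * n := by
  have hnR : (2 : ℝ) ≤ n := by exact_mod_cast hn
  induction m, hm using Nat.le_induction with
  | base =>
      rw [Finset.Ico_self, Finset.sum_empty, zero_add]
      have h : ((n:ℝ)+1)^(2-1) = (n:ℝ)+1 := by norm_num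
      rw [h]; nlinarith
  | succ m hm ih =>
      rw [Finset.sum_Ico_succ_top (by omega : 2 ≤ m)]
      have h1 : ((n:ℝ)+1) ^ (m + 1 - 1) = ((n:ℝ)+1) ^ (m-1) * ((n:ℝ)+1) := by
        rw [← pow_succ]; congr 1; omega
      have hp : (0:ℝ) ≤ ((n:ℝ)+1)^(m-1) := by positivity
      rw [h1]; nlinarith [ih]

theorem stmt5 (k n ℓ : ℕ) (hk : 2 ≤ k) (hkn : k ≤ n) (hℓ1 : 1 ≤ ℓ) (hℓ2 : ℓ ≤ n - 1)
    (J : Fin k → Fin n) (hJ : StrictMono J) (σ : Equiv.Perm (Fin k))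
    (hσ : σ ≠ (if (J ⟨0, by omega⟩ : ℕ) < ℓ ∧ ℓ ≤ (J ⟨1, by omega⟩ : ℕ) then
        Equiv.swap (⟨0, by omega⟩ : Fin k) ⟨1, by omega⟩ else 1)) :
    (∑ i : Fin k, blockWeight n ℓ i
        (J (((if (J ⟨0, by omega⟩ : ℕ) < ℓ ∧ ℓ ≤ (J ⟨1, by omega⟩ : ℕ) then
          Equiv.swap (⟨0, by omega⟩ : Fin k) ⟨1, by omega⟩ else 1) : Equiv.Perm (Fin k)) i)))
      < ∑ i : Fin k, blockWeight n ℓ i (J (σ i)) := by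
  classical
  have hk0 : 0 < k := by omega
  have hk1 : 1 < k := by omega
  have hn2 : 2 ≤ n := hk.trans hkn
  have hnR : (2:ℝ) ≤ (n:ℝ) := by exact_mod_cast hn2
  set e0 : Fin k := ⟨0, hk0⟩ with he0def
  set e1 : Fin k := ⟨1, hk1⟩ with he1def
  set τ : Equiv.Perm (Fin k) :=
    (if (J e0 : ℕ) < ℓ ∧ ℓ ≤ (J e1 : ℕ) then Equiv.swap e0 e1 else 1) with hτdef

  -- basic facts
  have he01 : e0 ≠ e1 := by
    simp [he0def, he1def, Fin.ext_iff]
  have hJ01 : (J e0 : ℕ) < (J e1 : ℕ) := hJ (by rw [he0def, he1def]; exact Fin.mk_lt_mk.mpr one_pos)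
  have hℓn : ℓ + 1 ≤ n := by omega
  -- the tail index set
  set E : Finset (Fin k) := (Finset.univ.erase e0).erase e1 with hEdef
  have hmemE : ∀ i : Fin k, i ∈ E ↔ 2 ≤ (i : ℕ) := by
    intro i
    rw [hEdef]
    simp only [Finset.mem_erase, Finset.mem_univ, and_true, ne_eq, he0def, he1def, Fin.ext_iff]
    omega
  -- weight row facts
  have hW0 : ∀ x : Fin n, blockWeight n ℓ e0 x = 0 := by
    intro x; simp [blockWeight, he0def]
  have hW1 : ∀ x : Fin n, blockWeight n ℓ e1 x
      = (if (x : ℕ) < ℓ then (ℓ : ℝ) - ((x : ℕ) : ℝ) else (n : ℝ) - ((x : ℕ) : ℝ) + (ℓ : ℝ)) := by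
    intro x; simp [blockWeight, he1def]
  have hWc : ∀ i ∈ E, ∀ x : Fin n, blockWeight n ℓ i x
      = ((n : ℝ) + 1) ^ ((i : ℕ) - 1) * (n : ℝ) * ((n : ℝ) - ((x : ℕ) : ℝ)) := by
    intro i hi x
    have h2 : 2 ≤ (i : ℕ) := (hmemE i).1 hi
    rw [blockWeight, if_neg (by omega), if_neg (by omega)]
  -- bounds on row 1
  have hw_ge : ∀ x : Fin n, (1 : ℝ) ≤ blockWeight n ℓ e1 x := by
    intro x
    rw [hW1]
    split
    · next h =>
        have h1 : ((x : ℕ) : ℝ) + 1 ≤ (ℓ : ℝ) := by exact_mod_cast h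
        linarith
    · next h =>
        have h1 : ((x : ℕ) : ℝ) + 1 ≤ (n : ℝ) := by exact_mod_cast x.isLt
        have h2 : (1 : ℝ) ≤ (ℓ : ℝ) := by exact_mod_cast hℓ1
        linarith
  have hw_le : ∀ x : Fin n, blockWeight n ℓ e1 x ≤ (n : ℝ) := by
    intro x
    rw [hW1]
    split
    · next h =>
        have h1 : (ℓ : ℝ) + 1 ≤ (n : ℝ) := by exact_mod_cast hℓn
        have h2 : (0 : ℝ) ≤ ((x : ℕ) : ℝ) := Nat.cast_nonneg _
        linarith
    · next h =>
        have h1 : (ℓ : ℝ) ≤ ((x : ℕ) : ℝ) := by exact_mod_cast not_lt.1 h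
        linarith
  -- sum splitting
  have hsplit : ∀ π : Equiv.Perm (Fin k),
      (∑ i : Fin k, blockWeight n ℓ i (J (π i)))
        = blockWeight n ℓ e1 (J (π e1)) + ∑ i ∈ E, blockWeight n ℓ i (J (π i)) := by
    intro π
    have h1 : e1 ∈ Finset.univ.erase e0 := by
      simp [Finset.mem_erase]
      exact fun h => he01 h.symm
    rw [← Finset.add_sum_erase _ _ (Finset.mem_univ e0), hW0, zero_add,
        ← Finset.add_sum_erase _ _ h1, ← hEdef]
  have hτE : ∀ i ∈ E, τ i = i := by
    intro i hi
    have h2 : 2 ≤ (i : ℕ) := (hmemE i).1 hi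
    have hi0 : i ≠ e0 := by rw [he0def]; simp [Fin.ext_iff]; omega
    have hi1 : i ≠ e1 := by rw [he1def]; simp [Fin.ext_iff]; omega
    rw [hτdef]
    split
    · exact Equiv.swap_apply_of_ne_of_ne hi0 hi1
    · rfl
  rw [hsplit τ, hsplit σ]
  have hτsum : (∑ i ∈ E, blockWeight n ℓ i (J (τ i))) = ∑ i ∈ E, blockWeight n ℓ i (J i) :=
    Finset.sum_congr rfl fun i hi => by rw [hτE i hi]
  rw [hτsum]
  by_cases hA : ∀ i ∈ E, σ i = i
  · -- Case A : σ fixes the tail, so σ ∈ {1, swap}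
    have hσsum : (∑ i ∈ E, blockWeight n ℓ i (J (σ i))) = ∑ i ∈ E, blockWeight n ℓ i (J i) :=
      Finset.sum_congr rfl fun i hi => by rw [hA i hi]
    rw [hσsum]
    refine add_lt_add_of_lt_of_le ?_ (le_refl _)
    have hstab : ∀ i : Fin k, σ i = e0 ∨ σ i = e1 ∨ σ i = i := by
      intro i
      by_cases h0 : σ i = e0
      · exact Or.inl h0
      by_cases h1 : σ i = e1
      · exact Or.inr (Or.inl h1)
      refine Or.inr (Or.inr ?_)
      have hmem : σ i ∈ E := by
        rw [hmemE]
        have hv0 : (σ i : ℕ) ≠ 0 := fun h => h0 (by rw [he0def]; exact Fin.ext h)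
        have hv1 : (σ i : ℕ) ≠ 1 := fun h => h1 (by rw [he1def]; exact Fin.ext h)
        omega
      exact σ.injective (hA _ hmem)
    have hσe0 : σ e0 = e0 ∨ σ e0 = e1 := by
      rcases hstab e0 with h | h | h
      · exact Or.inl h
      · exact Or.inr h
      · exact Or.inl h
    have hσe1 : σ e1 = e0 ∨ σ e1 = e1 := by
      rcases hstab e1 with h | h | h
      · exact Or.inl h
      · exact Or.inr h
      · exact Or.inr h
    have hchar : σ = 1 ∨ σ = Equiv.swap e0 e1 := by
      rcases hσe0 with ha | ha <;> rcases hσe1 with hb | hb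
      · exact absurd (σ.injective (ha.trans hb.symm)) he01
      · left
        apply Equiv.ext
        intro i
        rcases hstab i with h | h | h
        · have hi : i = e0 := σ.injective (h.trans ha.symm)
          simp [hi, h, ha]
        · have hi : i = e1 := σ.injective (h.trans hb.symm)
          simp [hi, h, hb]
        · simp [h]
      · right
        apply Equiv.ext
        intro i
        rcases hstab i with h | h | h
        · have hi : i = e1 := σ.injective (h.trans hb.symm)
          rw [hi, hb, Equiv.swap_apply_right]
        · have hi : i = e0 := σ.injective (h.trans ha.symm)
          rw [hi, ha, Equiv.swap_apply_left]
        · have hi0 : i ≠ e0 := by rintro rfl; exact he01 (h.symm.trans ha)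
          have hi1 : i ≠ e1 := by rintro rfl; exact he01 ((h.symm.trans hb).symm)
          rw [h, Equiv.swap_apply_of_ne_of_ne hi0 hi1]
      · exact absurd (σ.injective (ha.trans hb.symm)) he01
    by_cases hc : (J e0 : ℕ) < ℓ ∧ ℓ ≤ (J e1 : ℕ)
    · -- τ = swap, so σ = 1
      have hτ : τ = Equiv.swap e0 e1 := by rw [hτdef, if_pos hc]
      have hσ1 : σ = 1 := by
        rcases hchar with h | h
        · exact h
        · exact absurd (h.trans hτ.symm) hσ
      rw [hτ, hσ1, Equiv.swap_apply_right, Equiv.Perm.one_apply, hW1, hW1,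
        if_pos hc.1, if_neg (not_lt.2 hc.2)]
      have h1 : ((J e1 : ℕ) : ℝ) + 1 ≤ (n : ℝ) := by exact_mod_cast (J e1).isLt
      have h2 : (0 : ℝ) ≤ ((J e0 : ℕ) : ℝ) := Nat.cast_nonneg _
      linarith
    · -- τ = 1, so σ = swap
      have hτ : τ = 1 := by rw [hτdef, if_neg hc]
      have hσ1 : σ = Equiv.swap e0 e1 := by
        rcases hchar with h | h
        · exact absurd (h.trans hτ.symm) hσ
        · exact h
      rw [hτ, hσ1, Equiv.swap_apply_right, Equiv.Perm.one_apply, hW1, hW1]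
      have hJR : ((J e0 : ℕ) : ℝ) < ((J e1 : ℕ) : ℝ) := by exact_mod_cast hJ01
      by_cases hx : (J e1 : ℕ) < ℓ
      · have hx0 : (J e0 : ℕ) < ℓ := lt_trans hJ01 hx
        rw [if_pos hx, if_pos hx0]
        linarith
      · have hx0 : ¬ (J e0 : ℕ) < ℓ := by
          intro h
          exact hc ⟨h, not_lt.1 hx⟩
        rw [if_neg hx, if_neg hx0]
        linarith
  · -- Case B : σ moves some tail index
    push_neg at hA
    obtain ⟨i₀, hi₀E, hi₀⟩ := hA
    set D : Finset (Fin k) := E.filter (fun i => σ i ≠ i) with hDdef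
    have hDne : D.Nonempty := ⟨i₀, by rw [hDdef]; simp [hi₀E, hi₀]⟩
    set m : Fin k := D.max' hDne with hmdef
    have hmD : m ∈ D := D.max'_mem hDne
    have hmE : m ∈ E := (Finset.mem_filter.1 hmD).1
    have hmσ : σ m ≠ m := (Finset.mem_filter.1 hmD).2
    have hm2 : 2 ≤ (m : ℕ) := (hmemE m).1 hmE
    have hfixgt : ∀ i : Fin k, m < i → σ i = i := by
      intro i hi
      by_contra hne
      have hiE : i ∈ E := (hmemE i).2 (by
        have hvm : (m : ℕ) < (i : ℕ) := hi
        omega)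
      have hle : i ≤ m := D.le_max' i (Finset.mem_filter.2 ⟨hiE, hne⟩)
      exact absurd hi (not_lt.2 hle)
    have hσm : σ m < m := by
      rcases lt_trichotomy (σ m) m with h | h | h
      · exact h
      · exact absurd h hmσ
      · exact absurd (σ.injective (hfixgt (σ m) h)) hmσ
    -- rewrite the σ-sum
    have hσsum : (∑ i ∈ E, blockWeight n ℓ i (J (σ i)))
        = (∑ i ∈ E, blockWeight n ℓ i (J i))
          + ∑ i ∈ E, ((n : ℝ) + 1) ^ ((i : ℕ) - 1) * (n : ℝ)
              * (((J i : ℕ) : ℝ) - ((J (σ i) : ℕ) : ℝ)) := by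
      rw [← Finset.sum_add_distrib]
      apply Finset.sum_congr rfl
      intro i hi
      rw [hWc i hi, hWc i hi]
      ring
    rw [hσsum]
    -- abbreviation
    set c : Fin k → ℝ := fun i => ((n : ℝ) + 1) ^ ((i : ℕ) - 1) * (n : ℝ) with hcdef
    set Δ : Fin k → ℝ := fun i => ((J i : ℕ) : ℝ) - ((J (σ i) : ℕ) : ℝ) with hΔdef
    have hsum2 : (∑ i ∈ E, c i * Δ i) = c m * Δ m + ∑ i ∈ E.erase m, c i * Δ i :=
      (Finset.add_sum_erase _ _ hmE).symm
    -- bound the main term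
    have hcm_pos : (0 : ℝ) < c m := by rw [hcdef]; positivity
    have hΔm : (1 : ℝ) ≤ Δ m := by
      have h1 : (J (σ m) : ℕ) < (J m : ℕ) := hJ hσm
      have hΔi : Δ m = ((J m : ℕ) : ℝ) - ((J (σ m) : ℕ) : ℝ) := rfl
      rw [hΔi]
      have : ((J (σ m) : ℕ) : ℝ) + 1 ≤ ((J m : ℕ) : ℝ) := by exact_mod_cast h1
      linarith
    have hmain : c m ≤ c m * Δ m := by nlinarith
    -- bound the error terms
    have herr : ∀ i ∈ E.erase m,
        -(if 2 ≤ (i : ℕ) ∧ (i : ℕ) < (m : ℕ) then ((n : ℝ) + 1) ^ ((i : ℕ) - 1) * n * n else 0)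
          ≤ c i * Δ i := by
      intro i hi
      obtain ⟨him, hiE⟩ := Finset.mem_erase.1 hi
      have h2 : 2 ≤ (i : ℕ) := (hmemE i).1 hiE
      by_cases hlt : (i : ℕ) < (m : ℕ)
      · rw [if_pos ⟨h2, hlt⟩]
        have hci : c i = ((n : ℝ) + 1) ^ ((i : ℕ) - 1) * n := rfl
        have hΔi : Δ i = ((J i : ℕ) : ℝ) - ((J (σ i) : ℕ) : ℝ) := rfl
        rw [hci, hΔi]
        have hcip : (0 : ℝ) < ((n : ℝ) + 1) ^ ((i : ℕ) - 1) * n := by positivity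
        have h1 : ((J (σ i) : ℕ) : ℝ) ≤ (n : ℝ) := by
          exact_mod_cast le_of_lt (J (σ i)).isLt
        have h3 : (0 : ℝ) ≤ ((J i : ℕ) : ℝ) := Nat.cast_nonneg _
        nlinarith
      · rw [if_neg (by tauto)]
        have hvm : (m : ℕ) < (i : ℕ) := by
          have hv : (i : ℕ) ≠ (m : ℕ) := fun h => him (Fin.ext h)
          omega
        have hfix : σ i = i := hfixgt i hvm
        have hΔi : Δ i = ((J i : ℕ) : ℝ) - ((J (σ i) : ℕ) : ℝ) := rfl
        rw [hΔi, hfix]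
        simp
    have herr2 : -(∑ i ∈ E.erase m,
          (if 2 ≤ (i : ℕ) ∧ (i : ℕ) < (m : ℕ) then ((n : ℝ) + 1) ^ ((i : ℕ) - 1) * n * n else 0))
        ≤ ∑ i ∈ E.erase m, c i * Δ i := by
      rw [← Finset.sum_neg_distrib]
      exact Finset.sum_le_sum herr
    have hsub : (∑ i ∈ E.erase m,
          (if 2 ≤ (i : ℕ) ∧ (i : ℕ) < (m : ℕ) then ((n : ℝ) + 1) ^ ((i : ℕ) - 1) * n * n else 0))
        ≤ ∑ i : Fin k,
          (if 2 ≤ (i : ℕ) ∧ (i : ℕ) < (m : ℕ) then ((n : ℝ) + 1) ^ ((i : ℕ) - 1) * n * n else 0) := by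
      apply Finset.sum_le_sum_of_subset_of_nonneg (Finset.subset_univ _)
      intro i _ _
      split
      · positivity
      · exact le_refl 0
    have huniv : (∑ i : Fin k,
          (if 2 ≤ (i : ℕ) ∧ (i : ℕ) < (m : ℕ) then ((n : ℝ) + 1) ^ ((i : ℕ) - 1) * n * n else 0))
        = ∑ j ∈ Finset.Ico 2 (m : ℕ), ((n : ℝ) + 1) ^ (j - 1) * n * n := by
      rw [Fin.sum_univ_eq_sum_range
        (fun j => if 2 ≤ j ∧ j < (m : ℕ) then ((n : ℝ) + 1) ^ (j - 1) * n * n else 0) k]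
      rw [← Finset.sum_filter]
      congr 1
      ext j
      simp only [Finset.mem_filter, Finset.mem_range, Finset.mem_Ico]
      have := m.isLt
      omega
    have hgeom := auxGeom n hn2 (m : ℕ) hm2
    have hcm : c m = ((n : ℝ) + 1) ^ ((m : ℕ) - 1) * n := by rw [hcdef]
    have hb1 : blockWeight n ℓ e1 (J (τ e1)) ≤ (n : ℝ) := hw_le _
    have hb2 : (1 : ℝ) ≤ blockWeight n ℓ e1 (J (σ e1)) := hw_ge _
    have herr3 : -(∑ j ∈ Finset.Ico 2 (m : ℕ), ((n : ℝ) + 1) ^ (j - 1) * n * n)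
        ≤ ∑ i ∈ E.erase m, c i * Δ i := by
      rw [← huniv]
      linarith
    linarith
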